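/- An n×n matrix A over a Euclidean domain is a unit in the matrix ring (i.e., invertible) if and only if it is a product of elementary row matrices (of types I, II, and III). -/

import Mathlib

/-- Type I elementary matrix: row swap. -/
def IsTypeI {R : Type*} [CommRing R] {n : ℕ} (E : Matrix (Fin n) (Fin n) R) : Prop :=
  ∃ i j : Fin n, E = (1 : Matrix (Fin n) (Fin n) R).submatrix (⇑(Equiv.swap i j)) id

/-- Type II elementary matrix: add `c` times row `j` to row `i`. -/
def IsTypeII {R : Type*} [CommRing R] {n : ℕ} (E : Matrix (Fin n) (Fin n) R) : Prop :=
  ∃ i j : Fin n, i ≠ j ∧ ∃ c : R, E = 1 + Matrix.single i j c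

/-- Type III elementary matrix: multiply row `i` by a unit `u`. -/
def IsTypeIII {R : Type*} [CommRing R] {n : ℕ} (E : Matrix (Fin n) (Fin n) R) : Prop :=
  ∃ i : Fin n, ∃ u : R, IsUnit u ∧
    E = Matrix.diagonal (fun k => if k = i then u else 1)

def Elem {R : Type*} [CommRing R] {n : ℕ} (E : Matrix (Fin n) (Fin n) R) : Prop :=
  IsTypeI E ∨ IsTypeII E ∨ IsTypeIII E

namespace ElemAux
open Matrix
variable {R : Type*} [CommRing R] {n : ℕ}

lemma perm_one_mul (σ : Equiv.Perm (Fin n)) (M : Matrix (Fin n) (Fin n) R) :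
    (1 : Matrix (Fin n) (Fin n) R).submatrix (⇑σ) id * M = M.submatrix (⇑σ) id := by
  ext i j
  simp [Matrix.mul_apply, Matrix.one_apply]

lemma elem_isUnit {E : Matrix (Fin n) (Fin n) R} (h : Elem E) : IsUnit E := by
  rw [Matrix.isUnit_iff_isUnit_det]
  rcases h with ⟨i, j, rfl⟩ | ⟨i, j, hij, c, rfl⟩ | ⟨i, u, hu, rfl⟩
  · rw [Matrix.det_permute, Matrix.det_one, mul_one]
    exact (Equiv.Perm.sign (Equiv.swap i j)).isUnit.map (Int.castRingHom R)
  · rw [show (1 + Matrix.single i j c) = Matrix.transvection i j c from rfl,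
      Matrix.det_transvection_of_ne i j hij c]
    exact isUnit_one
  · rw [Matrix.det_diagonal]
    simpa using hu

lemma elemList_isUnit {L : List (Matrix (Fin n) (Fin n) R)} (h : ∀ E ∈ L, Elem E) :
    IsUnit L.prod := by
  induction L with
  | nil => simp
  | cons E L ih =>
    simp only [List.prod_cons]
    exact (elem_isUnit (h E (by simp))).mul (ih fun E' hE' => h E' (by simp [hE']))

lemma elem_inv {E : Matrix (Fin n) (Fin n) R} (h : Elem E) :
    ∃ E', Elem E' ∧ E' * E = 1 ∧ E * E' = 1 := by
  rcases h with ⟨i, j, rfl⟩ | ⟨i, j, hij, c, rfl⟩ | ⟨i, u, hu, rfl⟩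
  · refine ⟨_, Or.inl ⟨i, j, rfl⟩, ?_, ?_⟩ <;>
    · rw [perm_one_mul]
      ext a b
      simp [Matrix.one_apply, Equiv.swap_apply_self, eq_comm]
  · have key : ∀ c d : R, c + d = 0 →
        (1 + Matrix.single i j c) * (1 + Matrix.single i j d) = 1 := by
      intro c d hcd
      have h1 : (1 + Matrix.single i j c) * (1 + Matrix.single i j d)
          = 1 + (Matrix.single i j c + Matrix.single i j d)
            + Matrix.single i j c * Matrix.single i j d := by
        noncomm_ring
      rw [h1, Matrix.single_mul_single_of_ne (i := i) (j := j) (h := hij.symm), ← Matrix.single_add, hcd]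
      simp
    exact ⟨1 + Matrix.single i j (-c), Or.inr (Or.inl ⟨i, j, hij, -c, rfl⟩),
      key _ _ (by ring), key _ _ (by ring)⟩
  · refine ⟨Matrix.diagonal (fun k => if k = i then (↑hu.unit⁻¹ : R) else 1),
      Or.inr (Or.inr ⟨i, _, hu.unit⁻¹.isUnit, rfl⟩), ?_, ?_⟩ <;>
    · rw [Matrix.diagonal_mul_diagonal]
      have : ∀ f : Fin n → R, f = (fun _ => (1:R)) → Matrix.diagonal f = 1 := by
        rintro f rfl; exact Matrix.diagonal_one
      apply this
      funext k
      split_ifs with hk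
      · first
        | exact hu.val_inv_mul
        | exact hu.mul_val_inv
      · exact one_mul 1

lemma elemList_inv {L : List (Matrix (Fin n) (Fin n) R)} (h : ∀ E ∈ L, Elem E) :
    ∃ L' : List (Matrix (Fin n) (Fin n) R), (∀ E ∈ L', Elem E) ∧ L'.prod * L.prod = 1 := by
  induction L with
  | nil => exact ⟨[], by simp, by simp⟩
  | cons E L ih =>
    obtain ⟨L', hL', hinv⟩ := ih fun E' hE' => h E' (by simp [hE'])
    obtain ⟨E', hE', hEl, hEr⟩ := elem_inv (h E (by simp))
    refine ⟨L' ++ [E'], ?_, ?_⟩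
    · intro F hF
      rcases List.mem_append.mp hF with hF | hF
      · exact hL' F hF
      · simp at hF; subst hF; exact hE'
    · simp only [List.prod_append, List.prod_cons, List.prod_nil, mul_one]
      rw [mul_assoc, ← mul_assoc E', hEl, one_mul, hinv]

end ElemAux
namespace ElemAux
open Matrix
variable {R : Type*} [CommRing R] {n : ℕ}

def lift (M : Matrix (Fin n) (Fin n) R) : Matrix (Fin (n+1)) (Fin (n+1)) R :=
  Matrix.of (Fin.cons (Fin.cons 1 (0 : Fin n → R)) (fun i' => Fin.cons 0 (M i')))

@[simp] lemma lift_zero_zero (M : Matrix (Fin n) (Fin n) R) : lift M 0 0 = 1 := rfl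
@[simp] lemma lift_zero_succ (M : Matrix (Fin n) (Fin n) R) (j : Fin n) :
    lift M 0 j.succ = 0 := by simp [lift]
@[simp] lemma lift_succ_zero (M : Matrix (Fin n) (Fin n) R) (i : Fin n) :
    lift M i.succ 0 = 0 := by simp [lift]
@[simp] lemma lift_succ_succ (M : Matrix (Fin n) (Fin n) R) (i j : Fin n) :
    lift M i.succ j.succ = M i j := by simp [lift]

lemma lift_one : lift (1 : Matrix (Fin n) (Fin n) R) = 1 := by
  ext i j
  cases i using Fin.cases with
  | zero => cases j using Fin.cases with
    | zero => simp
    | succ j => simp [Matrix.one_apply, (Fin.succ_ne_zero j).symm]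
  | succ i => cases j using Fin.cases with
    | zero => simp [Matrix.one_apply, Fin.succ_ne_zero i]
    | succ j => simp [Matrix.one_apply, Fin.succ_inj]

lemma lift_mul (M N : Matrix (Fin n) (Fin n) R) : lift (M * N) = lift M * lift N := by
  ext i j
  rw [Matrix.mul_apply, Fin.sum_univ_succ]
  cases i using Fin.cases with
  | zero => cases j using Fin.cases with
    | zero => simp
    | succ j => simp
  | succ i => cases j using Fin.cases with
    | zero => simp
    | succ j => simp [Matrix.mul_apply]

lemma lift_elem {E : Matrix (Fin n) (Fin n) R} (h : Elem E) : Elem (lift E) := by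
  rcases h with ⟨i, j, rfl⟩ | ⟨i, j, hij, c, rfl⟩ | ⟨i, u, hu, rfl⟩
  · refine Or.inl ⟨i.succ, j.succ, ?_⟩
    ext a b
    have hs : ∀ a' : Fin n, Equiv.swap i.succ j.succ a'.succ = (Equiv.swap i j a').succ :=
      fun a' => (Fin.succ_injective n).swap_apply i j a'
    cases a using Fin.cases with
    | zero =>
      have h0 : Equiv.swap i.succ j.succ 0 = 0 :=
        Equiv.swap_apply_of_ne_of_ne (Fin.succ_ne_zero i).symm (Fin.succ_ne_zero j).symm
      cases b using Fin.cases with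
      | zero => simp [h0, Matrix.one_apply]
      | succ b => simp [h0, Matrix.one_apply, (Fin.succ_ne_zero b).symm]
    | succ a =>
      cases b using Fin.cases with
      | zero => simp [hs, Matrix.one_apply, Fin.succ_ne_zero]
      | succ b => simp [hs, Matrix.one_apply, Fin.succ_inj]
  · refine Or.inr (Or.inl ⟨i.succ, j.succ, by simpa [Fin.succ_inj] using hij, c, ?_⟩)
    ext a b
    cases a using Fin.cases with
    | zero =>
      cases b using Fin.cases with
      | zero => simp [Matrix.single, Fin.succ_ne_zero, Matrix.one_apply]
      | succ b => simp [Matrix.one_apply, Matrix.single, Fin.succ_ne_zero,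
          (Fin.succ_ne_zero b).symm]
    | succ a =>
      cases b using Fin.cases with
      | zero => simp [Matrix.one_apply, Matrix.single, Fin.succ_ne_zero,
          (Fin.succ_ne_zero j).symm]
      | succ b => simp [Matrix.one_apply, Matrix.single, Fin.succ_inj]
  · refine Or.inr (Or.inr ⟨i.succ, u, hu, ?_⟩)
    ext a b
    cases a using Fin.cases with
    | zero =>
      cases b using Fin.cases with
      | zero => simp [Matrix.diagonal, (Fin.succ_ne_zero i).symm]
      | succ b => simp [Matrix.diagonal, (Fin.succ_ne_zero b).symm]
    | succ a =>
      cases b using Fin.cases with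
      | zero => simp [Matrix.diagonal, Fin.succ_ne_zero]
      | succ b => simp [Matrix.diagonal, Fin.succ_inj]

lemma lift_prod (L : List (Matrix (Fin n) (Fin n) R)) :
    (L.map lift).prod = lift L.prod := by
  induction L with
  | nil => simp [lift_one]
  | cons E L ih => simp [lift_mul, ih]

lemma mul_list_sum {α : Type*} (M : Matrix (Fin n) (Fin n) R) (l : List α)
    (f : α → Matrix (Fin n) (Fin n) R) :
    M * (l.map f).sum = (l.map fun a => M * f a).sum := by
  induction l with
  | nil => simp
  | cons a l ih => simp [mul_add, ih]

lemma list_prod_one_add_std (l : List (Fin n)) (i₀ : Fin n) (h : ∀ j ∈ l, j ≠ i₀)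
    (v : Fin n → R) :
    (l.map fun j => 1 + Matrix.single i₀ j (v j)).prod
      = 1 + (l.map fun j => Matrix.single i₀ j (v j)).sum := by
  induction l with
  | nil => simp
  | cons j l ih =>
    rw [List.map_cons, List.prod_cons, ih (fun j' hj' => h j' (by simp [hj'])),
      List.map_cons, List.sum_cons]
    have hz : Matrix.single i₀ j (v j) * (l.map fun j' =>
        Matrix.single i₀ j' (v j')).sum = 0 := by
      rw [mul_list_sum]
      apply List.sum_eq_zero
      intro x hx
      rw [List.mem_map] at hx
      obtain ⟨j', hj', rfl⟩ := hx
      exact Matrix.single_mul_single_of_ne (v j) i₀ j i₀ (h j (by simp)) (v j')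
    rw [mul_add, mul_one, add_mul, one_mul, hz]
    abel

end ElemAux
namespace ElemAux
open Matrix
section ED
variable {R : Type*} [EuclideanDomain R] {n : ℕ}

lemma transvec_mul_apply (i j : Fin (n+1)) (c : R) (A : Matrix (Fin (n+1)) (Fin (n+1)) R)
    (k l : Fin (n+1)) :
    ((1 + Matrix.single i j c) * A) k l
      = A k l + if k = i then c * A j l else 0 := by
  rw [add_mul, one_mul, Matrix.add_apply]
  congr 1
  by_cases hk : k = i
  · subst hk; rw [Matrix.single_mul_apply_same, if_pos rfl]
  · rw [Matrix.single_mul_apply_of_ne (h := hk), if_neg hk]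

lemma clearCol (A : Matrix (Fin (n+1)) (Fin (n+1)) R) (hA0 : A 0 0 ≠ 0) :
    ∃ L : List (Matrix (Fin (n+1)) (Fin (n+1)) R), (∀ E ∈ L, Elem E) ∧
      (L.prod * A) 0 0 ≠ 0 ∧ ∀ i, i ≠ 0 → (L.prod * A) i 0 = 0 := by
  classical
  have key : ∀ a : R, a ≠ 0 → ∀ (k : ℕ) (A : Matrix (Fin (n+1)) (Fin (n+1)) R), A 0 0 = a →
      (Finset.univ.filter (fun i => i ≠ 0 ∧ A i 0 ≠ 0)).card ≤ k →
      ∃ L : List (Matrix (Fin (n+1)) (Fin (n+1)) R), (∀ E ∈ L, Elem E) ∧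
        (L.prod * A) 0 0 ≠ 0 ∧ ∀ i, i ≠ 0 → (L.prod * A) i 0 = 0 := by
    intro a
    refine WellFounded.induction EuclideanDomain.r_wellFounded
      (C := fun a => a ≠ 0 → ∀ (k : ℕ) (A : Matrix (Fin (n+1)) (Fin (n+1)) R), A 0 0 = a →
        (Finset.univ.filter (fun i => i ≠ 0 ∧ A i 0 ≠ 0)).card ≤ k →
        ∃ L : List (Matrix (Fin (n+1)) (Fin (n+1)) R), (∀ E ∈ L, Elem E) ∧
          (L.prod * A) 0 0 ≠ 0 ∧ ∀ i, i ≠ 0 → (L.prod * A) i 0 = 0) a ?_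
    clear hA0 A a
    intro a iha ha k
    induction k with
    | zero =>
      intro A hA hcard
      refine ⟨[], by simp, by simpa [hA] using ha, ?_⟩
      intro i hi
      by_contra hne
      have hmem : i ∈ Finset.univ.filter (fun i => i ≠ 0 ∧ A i 0 ≠ 0) := by
        simp only [Finset.mem_filter, Finset.mem_univ, true_and]
        refine ⟨hi, ?_⟩
        simpa using hne
      have := Finset.card_pos.mpr ⟨i, hmem⟩
      omega
    | succ k ihk =>
      intro A hA hcard
      by_cases hall : ∀ i, i ≠ 0 → A i 0 = 0
      · exact ⟨[], by simp, by simpa [hA] using ha, by simpa using hall⟩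
      · push_neg at hall
        obtain ⟨i, hi0, hAi⟩ := hall
        set q := A i 0 / a with hq
        set E := 1 + Matrix.single i (0 : Fin (n+1)) (-q) with hEdef
        have hE : Elem E := Or.inr (Or.inl ⟨i, (0 : Fin (n+1)), hi0, -q, hEdef⟩)
        set B := E * A with hBdef
        have hBapp : ∀ k' l, B k' l = A k' l + if k' = i then -q * A 0 l else 0 := by
          intro k' l
          rw [hBdef, hEdef, transvec_mul_apply]
        have hB00 : B 0 0 = a := by
          rw [hBapp, if_neg (Ne.symm hi0), add_zero, hA]
        have hBi0 : B i 0 = A i 0 % a := by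
          rw [hBapp, if_pos rfl, hA, EuclideanDomain.mod_eq_sub_mul_div]
          ring
        have hBother : ∀ k', k' ≠ i → B k' 0 = A k' 0 := by
          intro k' hk'
          rw [hBapp, if_neg hk', add_zero]
        by_cases hrem : A i 0 % a = 0
        · have hsub : Finset.univ.filter (fun j => j ≠ 0 ∧ B j 0 ≠ 0) ⊆
              (Finset.univ.filter (fun j => j ≠ 0 ∧ A j 0 ≠ 0)).erase i := by
            intro j hj
            simp only [Finset.mem_filter, Finset.mem_univ, true_and] at hj
            have hji : j ≠ i := by
              rintro rfl
              exact hj.2 (hBi0.trans hrem)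
            rw [Finset.mem_erase]
            refine ⟨hji, ?_⟩
            simp only [Finset.mem_filter, Finset.mem_univ, true_and]
            exact ⟨hj.1, by rw [← hBother j hji]; exact hj.2⟩
          have hcard' : (Finset.univ.filter (fun j => j ≠ 0 ∧ B j 0 ≠ 0)).card ≤ k := by
            have h1 := Finset.card_le_card hsub
            have hmem : i ∈ Finset.univ.filter (fun j => j ≠ 0 ∧ A j 0 ≠ 0) := by
              simp [hi0, hAi]
            rw [Finset.card_erase_of_mem hmem] at h1
            omega
          obtain ⟨L, hL, h1, h2⟩ := ihk B hB00 hcard'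
          have hprod : (L ++ [E]).prod * A = L.prod * B := by
            rw [List.prod_append, List.prod_cons, List.prod_nil, mul_one, mul_assoc, hBdef]
          refine ⟨L ++ [E], ?_, by rwa [hprod], fun i hi => by rw [hprod]; exact h2 i hi⟩
          intro F hF
          rcases List.mem_append.mp hF with hF | hF
          · exact hL F hF
          · simp at hF; subst hF; exact hE
        · set S := (1 : Matrix (Fin (n+1)) (Fin (n+1)) R).submatrix (⇑(Equiv.swap 0 i)) id
            with hSdef
          have hS : Elem S := Or.inl ⟨0, i, rfl⟩
          set C := S * B with hCdef
          have hC : C = B.submatrix (⇑(Equiv.swap 0 i)) id := perm_one_mul _ _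
          have hC00 : C 0 0 = A i 0 % a := by
            rw [hC, Matrix.submatrix_apply, Equiv.swap_apply_left, id, hBi0]
          have hr : EuclideanDomain.r (A i 0 % a) a := EuclideanDomain.mod_lt _ ha
          obtain ⟨L, hL, h1, h2⟩ := iha (A i 0 % a) hr hrem
            (Finset.univ.filter (fun j => j ≠ 0 ∧ C j 0 ≠ 0)).card C hC00 le_rfl
          have hprod : (L ++ [S, E]).prod * A = L.prod * C := by
            rw [List.prod_append, List.prod_cons, List.prod_cons, List.prod_nil, mul_one,
              mul_assoc, hCdef, hBdef, mul_assoc]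
          refine ⟨L ++ [S, E], ?_, by rwa [hprod], fun i hi => by rw [hprod]; exact h2 i hi⟩
          intro F hF
          rcases List.mem_append.mp hF with hF | hF
          · exact hL F hF
          · rcases List.mem_cons.mp hF with rfl | hF
            · exact hS
            · simp at hF; subst hF; exact hE
  exact key (A 0 0) hA0 _ A rfl le_rfl

end ED
end ElemAux
namespace ElemAux
open Matrix
variable {R : Type*} [EuclideanDomain R]

lemma main : ∀ (n : ℕ) (A : Matrix (Fin n) (Fin n) R), IsUnit A →
    ∃ L : List (Matrix (Fin n) (Fin n) R), (∀ E ∈ L, Elem E) ∧ A = L.prod := by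
  intro n
  induction n with
  | zero =>
    intro A _
    refine ⟨[], by simp, ?_⟩
    ext i j
    exact i.elim0
  | succ n ih =>
    intro A hA
    -- Step 1: find a nonzero entry in the first column
    have h₁ : ∃ i, A i 0 ≠ 0 := by
      by_contra h
      push_neg at h
      obtain ⟨u, hu⟩ := hA
      have hinv : (↑u⁻¹ : Matrix (Fin (n+1)) (Fin (n+1)) R) * A = 1 := by
        rw [← hu]; exact u.inv_mul
      have h00 : ((↑u⁻¹ : Matrix (Fin (n+1)) (Fin (n+1)) R) * A) 0 0 = (1:R) := by
        rw [hinv]; simp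
      rw [Matrix.mul_apply] at h00
      simp only [h, mul_zero, Finset.sum_const_zero] at h00
      exact zero_ne_one h00
    obtain ⟨i₀, hi₀⟩ := h₁
    set S := (1 : Matrix (Fin (n+1)) (Fin (n+1)) R).submatrix (⇑(Equiv.swap 0 i₀)) id with hSdef
    have hS : Elem S := Or.inl ⟨0, i₀, rfl⟩
    set A₁ := S * A with hA₁def
    have hA₁00 : A₁ 0 0 ≠ 0 := by
      rw [hA₁def, hSdef, perm_one_mul]
      simpa [Equiv.swap_apply_left] using hi₀
    -- Step 2: clear the first column
    obtain ⟨L₂, hL₂, hBpiv, hBcol⟩ := clearCol A₁ hA₁00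
    set B := L₂.prod * A₁ with hBdef
    have hBunit : IsUnit B := by
      rw [hBdef, hA₁def]
      exact (elemList_isUnit hL₂).mul ((elem_isUnit hS).mul hA)
    -- Step 3: the pivot is a unit
    obtain ⟨v, hv⟩ := hBunit
    have hvB : (↑v⁻¹ : Matrix (Fin (n+1)) (Fin (n+1)) R) * B = 1 := by
      rw [← hv]; exact v.inv_mul
    have hpiv_unit : IsUnit (B 0 0) := by
      have h00 : ((↑v⁻¹ : Matrix (Fin (n+1)) (Fin (n+1)) R) * B) 0 0 = (1:R) := by
        rw [hvB]; simp
      rw [Matrix.mul_apply] at h00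
      rw [Finset.sum_eq_single 0 (fun m _ hm => by rw [hBcol m hm, mul_zero])
        (fun hm => absurd (Finset.mem_univ 0) hm)] at h00
      exact IsUnit.of_mul_eq_one _ (by rw [mul_comm]; exact h00)
    -- Step 4: normalize the pivot to 1
    set D := Matrix.diagonal
      (fun k => if k = (0 : Fin (n+1)) then (↑hpiv_unit.unit⁻¹ : R) else 1) with hDdef
    have hD : Elem D := Or.inr (Or.inr ⟨0, _, hpiv_unit.unit⁻¹.isUnit, hDdef⟩)
    set C := D * B with hCdef
    have hCapp : ∀ i j, C i j = (if i = (0:Fin (n+1)) then (↑hpiv_unit.unit⁻¹ : R) else 1) * B i j := by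
      intro i j
      rw [hCdef, hDdef, Matrix.diagonal_mul]
    have hC00 : C 0 0 = 1 := by
      rw [hCapp, if_pos rfl]
      exact hpiv_unit.val_inv_mul
    have hCcol : ∀ i, i ≠ 0 → C i 0 = 0 := by
      intro i hi
      rw [hCapp, hBcol i hi, mul_zero]
    have hCunit : IsUnit C := by
      rw [hCdef]
      exact (elem_isUnit hD).mul ⟨v, hv⟩
    -- Step 5: factor out the first row
    set A' := C.submatrix Fin.succ Fin.succ with hA'def
    set T := 1 + ∑ j : Fin n,
      Matrix.single (0 : Fin (n+1)) j.succ (C 0 j.succ) with hTdef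
    have hT_app : ∀ (i k : Fin (n+1)), T i k
        = (1 : Matrix (Fin (n+1)) (Fin (n+1)) R) i k
          + (if i = 0 then (if k = 0 then 0 else C 0 k) else 0) := by
      intro i k
      rw [hTdef, Matrix.add_apply, Matrix.sum_apply]
      congr 1
      by_cases hi : i = 0
      · subst hi
        rw [if_pos rfl]
        cases k using Fin.cases with
        | zero => simp [Matrix.single, Fin.succ_ne_zero]
        | succ k' =>
          rw [if_neg (Fin.succ_ne_zero k')]
          simp [Matrix.single, Fin.succ_inj]
      · rw [if_neg hi]
        have : ∀ j : Fin n,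
            Matrix.single (0 : Fin (n+1)) j.succ (C 0 j.succ) i k = 0 := by
          intro j
          simp [Matrix.single, (show ¬(0:Fin (n+1)) = i from fun h => hi h.symm)]
        simp [this]
    have hCT : C = lift A' * T := by
      ext i k
      rw [Matrix.mul_apply, Fin.sum_univ_succ]
      cases i using Fin.cases with
      | zero =>
        simp only [lift_zero_zero, lift_zero_succ, one_mul, zero_mul,
          Finset.sum_const_zero, add_zero]
        rw [hT_app]
        by_cases hk : k = 0
        · subst hk; simpa [Matrix.one_apply] using hC00
        · rw [if_neg hk, Matrix.one_apply_ne (fun h => hk h.symm), zero_add, if_pos rfl]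
      | succ i =>
        simp only [lift_succ_zero, zero_mul, lift_succ_succ, zero_add]
        have hTs : ∀ m : Fin n, T m.succ k = (1 : Matrix (Fin (n+1)) (Fin (n+1)) R) m.succ k := by
          intro m
          rw [hT_app, if_neg (Fin.succ_ne_zero m), add_zero]
        rw [Finset.sum_congr rfl (fun m _ => by rw [hTs m])]
        cases k using Fin.cases with
        | zero =>
          rw [hCcol i.succ (Fin.succ_ne_zero i)]
          simp [Matrix.one_apply, Fin.succ_ne_zero]
        | succ k' =>
          rw [hA'def]
          simp [Matrix.one_apply, Fin.succ_inj, mul_ite, Finset.sum_ite_eq']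
    -- Step 6: T is a product of type II matrices
    set LT := ((List.finRange n).map Fin.succ).map
      (fun j => 1 + Matrix.single (0 : Fin (n+1)) j (C 0 j)) with hLTdef
    have hLT : ∀ E ∈ LT, Elem E := by
      intro E hE
      rw [hLTdef, List.mem_map] at hE
      obtain ⟨j, hj, rfl⟩ := hE
      rw [List.mem_map] at hj
      obtain ⟨j', _, rfl⟩ := hj
      exact Or.inr (Or.inl ⟨0, j'.succ, (Fin.succ_ne_zero j').symm, C 0 j'.succ, rfl⟩)
    have hTprod : T = LT.prod := by
      rw [hLTdef, list_prod_one_add_std _ _ ?_ _, hTdef]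
      · congr 1
        rw [List.map_map, Fin.sum_univ_def]
        rfl
      · intro j hj
        rw [List.mem_map] at hj
        obtain ⟨j', _, rfl⟩ := hj
        exact Fin.succ_ne_zero j'
    -- Step 7: A' is a unit
    have hTunit : IsUnit T := hTprod ▸ elemList_isUnit hLT
    obtain ⟨t, ht⟩ := hTunit
    have hliftunit : IsUnit (lift A') := by
      have hlift : lift A' = C * (↑t⁻¹ : Matrix (Fin (n+1)) (Fin (n+1)) R) := by
        rw [hCT, mul_assoc,
          show T * (↑t⁻¹ : Matrix (Fin (n+1)) (Fin (n+1)) R) = 1 from by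
            rw [← ht]; exact t.mul_inv,
          mul_one]
      rw [hlift]
      exact hCunit.mul t⁻¹.isUnit
    obtain ⟨w, hw⟩ := hliftunit
    have hwinv : lift A' * (↑w⁻¹ : Matrix (Fin (n+1)) (Fin (n+1)) R) = 1 := by
      rw [← hw]; exact w.mul_inv
    have hA'unit : IsUnit A' := by
      apply IsUnit.of_mul_eq_one
        (b := (↑w⁻¹ : Matrix (Fin (n+1)) (Fin (n+1)) R).submatrix Fin.succ Fin.succ)
      ext i k
      rw [Matrix.mul_apply]
      have : ∑ m : Fin n, A' i m * (↑w⁻¹ : Matrix (Fin (n+1)) (Fin (n+1)) R).submatrix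
          Fin.succ Fin.succ m k
          = (lift A' * (↑w⁻¹ : Matrix (Fin (n+1)) (Fin (n+1)) R)) i.succ k.succ := by
        rw [Matrix.mul_apply, Fin.sum_univ_succ, lift_succ_zero, zero_mul, zero_add]
        simp [Matrix.submatrix_apply]
      rw [this, hwinv]
      simp [Matrix.one_apply, Fin.succ_inj]
    obtain ⟨L₃, hL₃, hA'⟩ := ih A' hA'unit
    -- Step 8: assemble
    have hfull : (D :: (L₂ ++ [S])).prod * A = C := by
      rw [List.prod_cons, List.prod_append, List.prod_cons, List.prod_nil, mul_one]
      rw [hCdef, hBdef, hA₁def]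
      noncomm_ring
    have hDLSelem : ∀ E ∈ D :: (L₂ ++ [S]), Elem E := by
      intro E hE
      rcases List.mem_cons.mp hE with rfl | hE
      · exact hD
      · rcases List.mem_append.mp hE with hE | hE
        · exact hL₂ E hE
        · simp at hE; subst hE; exact hS
    obtain ⟨Linv, hLinv, hLinvprod⟩ := elemList_inv hDLSelem
    have hAeq : A = Linv.prod * C := by
      calc A = 1 * A := (one_mul A).symm
        _ = (Linv.prod * (D :: (L₂ ++ [S])).prod) * A := by rw [hLinvprod]
        _ = Linv.prod * ((D :: (L₂ ++ [S])).prod * A) := by rw [mul_assoc]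
        _ = Linv.prod * C := by rw [hfull]
    refine ⟨Linv ++ (L₃.map lift) ++ LT, ?_, ?_⟩
    · intro E hE
      rcases List.mem_append.mp hE with hE | hE
      · rcases List.mem_append.mp hE with hE | hE
        · exact hLinv E hE
        · rw [List.mem_map] at hE
          obtain ⟨F, hF, rfl⟩ := hE
          exact lift_elem (hL₃ F hF)
      · exact hLT E hE
    · rw [List.prod_append, List.prod_append, lift_prod, ← hA', ← hTprod, hAeq, hCT, mul_assoc]

end ElemAux

/-- A square matrix over a Euclidean domain is a unit in the matrix ring iff it is
a product of elementary matrices of types I, II and III. -/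
theorem stmt16 {R : Type*} [EuclideanDomain R] {n : ℕ}
    (A : Matrix (Fin n) (Fin n) R) :
    IsUnit A ↔ ∃ L : List (Matrix (Fin n) (Fin n) R),
      (∀ E ∈ L, IsTypeI E ∨ IsTypeII E ∨ IsTypeIII E) ∧ A = L.prod := by
  constructor
  · exact ElemAux.main n A
  · rintro ⟨L, hL, rfl⟩
    exact ElemAux.elemList_isUnit hL
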